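/- Let G be an undirected social network with total edge weight W > 0 and total self-weight N, let λ = N/W, let p = 2 − √2, and let q = max{ 1 − √2(2 + λ)/4, 0 }. Then the expected revenue of the randomized Influence-and-Exploit strategy that places each buyer in the influence set independently with probability q, namely Σ_{A ⊆ V} q^{|A|}(1 − q)^{|V| − |A|} R_IE(A, p), equals (1 − q)p(1 − p)(λ + 2q + p(1 − q))W and is at least 2√2(2 − √2)(√2 − 1) ≈ 0.686 times the maximum revenue R_max(G). In particular, there exists A ⊆ V with R_IE(A, 2 − √2) ≥ 2√2(2 − √2)(√2 − 1)·R_max(G). -/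

import Mathlib

open Finset

/-- The revenue of a marketing strategy `(π, p)` on an undirected social network. -/
noncomputable def revenue {V : Type*} [Fintype V] [DecidableEq V]
    (w : V → V → ℝ) (π : V ≃ Fin (Fintype.card V)) (p : V → ℝ) : ℝ :=
  ∑ i, p i * (1 - p i) *
    (w i i + ∑ j ∈ univ.filter (fun j => π j < π i), p j * w j i)

/-- The maximum revenue of an undirected social network. -/
noncomputable def maxRev {V : Type*} [Fintype V] [DecidableEq V]
    (w : V → V → ℝ) : ℝ :=
  sSup {r | ∃ (π : V ≃ Fin (Fintype.card V)) (p : V → ℝ),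
    (∀ i, 1/2 ≤ p i ∧ p i ≤ 1) ∧ r = revenue w π p}

/-- The expected revenue of the Influence-and-Exploit strategy `IE(A, p)`. -/
noncomputable def ieRev {V : Type*} [Fintype V] [DecidableEq V]
    (w : V → V → ℝ) (A : Finset V) (p : ℝ) : ℝ :=
  p * (1 - p) * ∑ i ∈ Aᶜ,
    (w i i + ∑ j ∈ A, w j i + (p / 2) * ∑ j ∈ Aᶜ \ {i}, w j i)

/-- `W`: total edge weight (each unordered pair counted once). -/
noncomputable def totalEdge {V : Type*} [Fintype V] [DecidableEq V]
    (w : V → V → ℝ) : ℝ :=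
  (∑ i, ∑ j ∈ ({i} : Finset V)ᶜ, w i j) / 2

/-- `N`: total self-weight. -/
noncomputable def totalSelf {V : Type*} [Fintype V] (w : V → V → ℝ) : ℝ :=
  ∑ i, w i i

section AuxRIE

variable {V : Type*} [Fintype V] [DecidableEq V]

private lemma RIE_sum_prod_ite (a b : V → ℝ) :
    ∑ A : Finset V, ∏ v, (if v ∈ A then a v else b v) = ∏ v, (a v + b v) := by
  rw [Finset.prod_add, ← Finset.powerset_univ]
  refine Finset.sum_congr rfl fun A hA => ?_
  rw [Finset.prod_ite]
  congr 1
  · congr 1; ext x; simp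
  · congr 1; ext x; simp

private lemma RIE_weight_prod (q : ℝ) (A : Finset V) :
    (∏ v, (if v ∈ A then q else 1 - q)) = q ^ A.card * (1-q) ^ (Fintype.card V - A.card) := by
  rw [Finset.prod_ite, Finset.prod_const, Finset.prod_const]
  congr 2
  · congr 1; ext x; simp
  · rw [show (univ.filter (fun x => ¬ x ∈ A)) = Aᶜ by ext x; simp, Finset.card_compl]

private lemma RIE_E0 (q : ℝ) :
    ∑ A : Finset V, q ^ A.card * (1-q) ^ (Fintype.card V - A.card) = 1 := by
  have h := RIE_sum_prod_ite (fun _ : V => q) (fun _ => 1 - q)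
  simp only [RIE_weight_prod] at h
  simpa using h

private lemma RIE_E1 (q : ℝ) (i : V) :
    ∑ A : Finset V, q ^ A.card * (1-q) ^ (Fintype.card V - A.card) *
      (if i ∈ A then 0 else 1) = 1 - q := by
  have key : ∀ A : Finset V, q ^ A.card * (1-q) ^ (Fintype.card V - A.card) * (if i ∈ A then 0 else 1)
      = ∏ v, (if v ∈ A then (if v = i then (0:ℝ) else q) else 1 - q) := by
    intro A
    by_cases hi : i ∈ A
    · rw [Finset.prod_eq_zero (Finset.mem_univ i)] <;> simp [hi]
    · simp only [hi, if_false, mul_one]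
      rw [← RIE_weight_prod]
      refine Finset.prod_congr rfl fun v _ => ?_
      by_cases hv : v ∈ A
      · have : v ≠ i := fun h => hi (h ▸ hv)
        simp [hv, this]
      · simp [hv]
  rw [Finset.sum_congr rfl fun A _ => key A, RIE_sum_prod_ite]
  rw [show (fun v : V => (if v = i then (0:ℝ) else q) + (1-q)) = fun v => if v = i then (1-q) else 1 from ?_]
  · rw [Finset.prod_ite_eq' univ i (fun _ => (1:ℝ)-q)]; simp
  · ext v; split <;> ring

private lemma RIE_E2 (q : ℝ) {i j : V} (hij : i ≠ j) :
    ∑ A : Finset V, q ^ A.card * (1-q) ^ (Fintype.card V - A.card) *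
      (if i ∈ A then 0 else 1) * (if j ∈ A then 1 else 0) = q * (1 - q) := by
  have key : ∀ A : Finset V, q ^ A.card * (1-q) ^ (Fintype.card V - A.card) *
        (if i ∈ A then 0 else 1) * (if j ∈ A then 1 else 0)
      = ∏ v, (if v ∈ A then (if v = i then (0:ℝ) else q) else (if v = j then 0 else 1 - q)) := by
    intro A
    by_cases hi : i ∈ A
    · rw [Finset.prod_eq_zero (Finset.mem_univ i)] <;> simp [hi]
    · by_cases hj : j ∈ A
      · simp only [hi, hj, if_false, if_true, mul_one, one_mul]
        rw [← RIE_weight_prod]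
        refine Finset.prod_congr rfl fun v _ => ?_
        by_cases hv : v ∈ A
        · have : v ≠ i := fun h => hi (h ▸ hv); simp [hv, this]
        · have : v ≠ j := fun h => hv (h ▸ hj); simp [hv, this]
      · rw [Finset.prod_eq_zero (Finset.mem_univ j)] <;> simp [hi, hj]
  rw [Finset.sum_congr rfl fun A _ => key A, RIE_sum_prod_ite]
  rw [show (fun v : V => (if v = i then (0:ℝ) else q) + (if v = j then 0 else 1 - q))
      = fun v => (if v = i then (1-q) else 1) * (if v = j then q else 1) from ?_]
  · rw [Finset.prod_mul_distrib, Finset.prod_ite_eq' univ i (fun _ => (1:ℝ)-q),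
      Finset.prod_ite_eq' univ j (fun _ => (q:ℝ))]
    simp [mul_comm]
  · ext v
    by_cases hvi : v = i
    · subst hvi; simp [hij]
    · by_cases hvj : v = j
      · subst hvj; simp [hvi, Ne.symm hij]
      · simp [hvi, hvj]

private lemma RIE_E3 (q : ℝ) {i j : V} (hij : i ≠ j) :
    ∑ A : Finset V, q ^ A.card * (1-q) ^ (Fintype.card V - A.card) *
      (if i ∈ A then 0 else 1) * (if j ∈ A then 0 else 1) = (1 - q) * (1 - q) := by
  have key : ∀ A : Finset V, q ^ A.card * (1-q) ^ (Fintype.card V - A.card) *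
        (if i ∈ A then 0 else 1) * (if j ∈ A then 0 else 1)
      = ∏ v, (if v ∈ A then (if v = i ∨ v = j then (0:ℝ) else q) else 1 - q) := by
    intro A
    by_cases hi : i ∈ A
    · rw [Finset.prod_eq_zero (Finset.mem_univ i)] <;> simp [hi]
    · by_cases hj : j ∈ A
      · rw [Finset.prod_eq_zero (Finset.mem_univ j)] <;> simp [hi, hj]
      · simp only [hi, hj, if_false, mul_one]
        rw [← RIE_weight_prod]
        refine Finset.prod_congr rfl fun v _ => ?_
        by_cases hv : v ∈ A
        · have h1 : v ≠ i := fun h => hi (h ▸ hv)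
          have h2 : v ≠ j := fun h => hj (h ▸ hv)
          simp [hv, h1, h2]
        · simp [hv]
  rw [Finset.sum_congr rfl fun A _ => key A, RIE_sum_prod_ite]
  rw [show (fun v : V => (if v = i ∨ v = j then (0:ℝ) else q) + (1 - q))
      = fun v => (if v = i then (1-q) else 1) * (if v = j then (1-q) else 1) from ?_]
  · rw [Finset.prod_mul_distrib, Finset.prod_ite_eq' univ i (fun _ => (1:ℝ)-q),
      Finset.prod_ite_eq' univ j (fun _ => (1:ℝ)-q)]
    simp
  · ext v
    by_cases hvi : v = i
    · subst hvi; simp [hij]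
    · by_cases hvj : v = j
      · subst hvj; simp [hvi, Ne.symm hij]
      · simp [hvi, hvj]

private lemma RIE_ieRev_eq (w : V → V → ℝ) (A : Finset V) (p : ℝ) :
    ieRev w A p = p * (1 - p) * ∑ i,
      ( (if i ∈ A then (0:ℝ) else 1) * w i i
      + ∑ j ∈ univ \ {i}, (if i ∈ A then (0:ℝ) else 1) * (if j ∈ A then (1:ℝ) else 0) * w j i
      + (p/2) * ∑ j ∈ univ \ {i}, (if i ∈ A then (0:ℝ) else 1) * (if j ∈ A then (0:ℝ) else 1) * w j i ) := by
  unfold ieRev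
  congr 1
  rw [show (Aᶜ : Finset V) = univ.filter (fun i => ¬ i ∈ A) by ext x; simp, Finset.sum_filter]
  refine Finset.sum_congr rfl fun i _ => ?_
  by_cases hi : i ∈ A
  · simp [hi]
  · simp only [hi, if_false, if_true, one_mul, not_false_iff]
    have h2 : ∑ j ∈ univ \ {i}, (if j ∈ A then (1:ℝ) else 0) * w j i = ∑ j ∈ A, w j i :=
      calc ∑ j ∈ univ \ {i}, (if j ∈ A then (1:ℝ) else 0) * w j i
          = ∑ j ∈ univ \ {i}, (if j ∈ A then w j i else 0) :=
            Finset.sum_congr rfl fun j _ => by split <;> simp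
        _ = ∑ j ∈ (univ \ {i}).filter (· ∈ A), w j i := (Finset.sum_filter _ _).symm
        _ = ∑ j ∈ A, w j i := by
            refine Finset.sum_congr ?_ fun _ _ => rfl
            ext x
            simp only [mem_filter, mem_sdiff, mem_univ, true_and, mem_singleton]
            exact ⟨fun h => h.2, fun hx => ⟨fun h => hi (h ▸ hx), hx⟩⟩
    have h3 : ∑ j ∈ univ \ {i}, (if j ∈ A then (0:ℝ) else 1) * w j i = ∑ j ∈ Aᶜ \ {i}, w j i :=
      calc ∑ j ∈ univ \ {i}, (if j ∈ A then (0:ℝ) else 1) * w j i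
          = ∑ j ∈ univ \ {i}, (if ¬ j ∈ A then w j i else 0) :=
            Finset.sum_congr rfl fun j _ => by by_cases h : j ∈ A <;> simp [h]
        _ = ∑ j ∈ (univ \ {i}).filter (fun j => ¬ j ∈ A), w j i := (Finset.sum_filter _ _).symm
        _ = ∑ j ∈ Aᶜ \ {i}, w j i := by
            refine Finset.sum_congr ?_ fun _ _ => rfl
            ext x
            simp only [mem_filter, mem_sdiff, mem_univ, true_and, mem_singleton, mem_compl]
            tauto
    rw [h2, h3, show (univ.filter (fun i => ¬ i ∈ A) \ {i}) = Aᶜ \ {i} by ext x; simp]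

private lemma RIE_offdiag (w : V → V → ℝ) (hsymm : ∀ i j, w i j = w j i) :
    ∑ i, ∑ j ∈ univ \ {i}, w j i = 2 * totalEdge w := by
  unfold totalEdge
  rw [show (∑ i, ∑ j ∈ ({i} : Finset V)ᶜ, w i j) = ∑ i, ∑ j ∈ univ \ {i}, w j i from ?_]
  · ring
  · refine Finset.sum_congr rfl fun i _ => ?_
    rw [show (({i} : Finset V)ᶜ) = univ \ {i} by ext x; simp]
    exact Finset.sum_congr rfl fun j _ => hsymm i j

private lemma RIE_cross (w : V → V → ℝ) (hsymm : ∀ i j, w i j = w j i)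
    (π : V ≃ Fin (Fintype.card V)) :
    ∑ i, ∑ j ∈ univ.filter (fun j => π j < π i), w j i = totalEdge w := by
  have hsplit : ∀ i : V, ∑ j ∈ ({i} : Finset V)ᶜ, w i j
      = (∑ j ∈ univ.filter (fun j => π j < π i), w i j)
      + ∑ j ∈ univ.filter (fun j => π i < π j), w i j := by
    intro i
    rw [← Finset.sum_filter_add_sum_filter_not (({i} : Finset V)ᶜ) (fun j => π j < π i)]
    congr 1
    · refine Finset.sum_congr ?_ fun _ _ => rfl
      ext x
      simp only [mem_filter, mem_compl, mem_singleton, mem_univ, true_and]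
      exact ⟨fun h => h.2, fun h => ⟨fun hx => by subst hx; exact lt_irrefl _ h, h⟩⟩
    · refine Finset.sum_congr ?_ fun _ _ => rfl
      ext x
      simp only [mem_filter, mem_compl, mem_singleton, mem_univ, true_and]
      constructor
      · rintro ⟨hxi, hlt⟩
        have : π x ≠ π i := fun h => hxi (π.injective h)
        exact lt_of_le_of_ne (not_lt.mp hlt) (Ne.symm this)
      · intro h
        exact ⟨fun hx => by subst hx; exact lt_irrefl _ h, not_lt.mpr h.le⟩
  have hswap : ∑ i, ∑ j ∈ univ.filter (fun j => π i < π j), w i j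
      = ∑ i, ∑ j ∈ univ.filter (fun j => π j < π i), w j i := by
    simp only [Finset.sum_filter]
    exact Finset.sum_comm
  have h1 : ∑ i, ∑ j ∈ univ.filter (fun j => π j < π i), w i j
      = ∑ i, ∑ j ∈ univ.filter (fun j => π j < π i), w j i :=
    Finset.sum_congr rfl fun i _ => Finset.sum_congr rfl fun j _ => hsymm i j
  have := Finset.sum_congr rfl fun i (_ : i ∈ (univ : Finset V)) => hsplit i
  rw [Finset.sum_add_distrib, hswap, h1] at this
  unfold totalEdge
  linarith [this]

private lemma RIE_maxRev_le (w : V → V → ℝ) (hsymm : ∀ i j, w i j = w j i)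
    (hnonneg : ∀ i j, 0 ≤ w i j) :
    maxRev w ≤ (totalEdge w + totalSelf w) / 4 := by
  have hW : 0 ≤ totalEdge w := by
    unfold totalEdge
    have : 0 ≤ ∑ i, ∑ j ∈ ({i} : Finset V)ᶜ, w i j :=
      Finset.sum_nonneg fun i _ => Finset.sum_nonneg fun j _ => hnonneg i j
    linarith
  have hN : 0 ≤ totalSelf w := Finset.sum_nonneg fun i _ => hnonneg i i
  refine Real.sSup_le ?_ (by linarith)
  rintro r ⟨π, pp, hpp, rfl⟩
  unfold revenue
  have hbound : ∀ i : V, pp i * (1 - pp i) *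
      (w i i + ∑ j ∈ univ.filter (fun j => π j < π i), pp j * w j i)
      ≤ (1/4) * (w i i + ∑ j ∈ univ.filter (fun j => π j < π i), w j i) := by
    intro i
    have h4 : pp i * (1 - pp i) ≤ 1/4 := by nlinarith [(hpp i).1, (hpp i).2]
    have h0 : 0 ≤ pp i * (1 - pp i) := by nlinarith [(hpp i).1, (hpp i).2]
    have hin : (w i i + ∑ j ∈ univ.filter (fun j => π j < π i), pp j * w j i)
        ≤ w i i + ∑ j ∈ univ.filter (fun j => π j < π i), w j i := by
      refine add_le_add (le_refl _) (Finset.sum_le_sum fun j _ => ?_)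
      nlinarith [(hpp j).1, (hpp j).2, hnonneg j i]
    have hin0 : 0 ≤ w i i + ∑ j ∈ univ.filter (fun j => π j < π i), pp j * w j i := by
      refine add_nonneg (hnonneg i i) (Finset.sum_nonneg fun j _ => ?_)
      nlinarith [(hpp j).1, hnonneg j i]
    calc pp i * (1 - pp i) * (w i i + ∑ j ∈ univ.filter (fun j => π j < π i), pp j * w j i)
        ≤ (1/4) * (w i i + ∑ j ∈ univ.filter (fun j => π j < π i), pp j * w j i) :=
          mul_le_mul_of_nonneg_right h4 hin0
      _ ≤ (1/4) * (w i i + ∑ j ∈ univ.filter (fun j => π j < π i), w j i) := by linarith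
  calc (∑ i, pp i * (1 - pp i) * (w i i + ∑ j ∈ univ.filter (fun j => π j < π i), pp j * w j i))
      ≤ ∑ i, (1/4) * (w i i + ∑ j ∈ univ.filter (fun j => π j < π i), w j i) :=
        Finset.sum_le_sum fun i _ => hbound i
    _ = (1/4) * (totalSelf w + ∑ i, ∑ j ∈ univ.filter (fun j => π j < π i), w j i) := by
        rw [← Finset.mul_sum, Finset.sum_add_distrib]; rfl
    _ = (totalEdge w + totalSelf w) / 4 := by rw [RIE_cross w hsymm π]; ring

private lemma RIE_expectation (w : V → V → ℝ) (hsymm : ∀ i j, w i j = w j i) (p q : ℝ) :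
    ∑ A : Finset V, q ^ A.card * (1-q) ^ (Fintype.card V - A.card) * ieRev w A p
    = p * (1-p) * ((1-q) * totalSelf w
        + (q*(1-q) + (p/2)*((1-q)*(1-q))) * (2 * totalEdge w)) := by
  have step1 : ∑ A : Finset V, q ^ A.card * (1-q) ^ (Fintype.card V - A.card) * ieRev w A p
      = p * (1-p) * ∑ i, ∑ A : Finset V,
          ( q ^ A.card * (1-q) ^ (Fintype.card V - A.card) * ((if i ∈ A then (0:ℝ) else 1) * w i i)
          + q ^ A.card * (1-q) ^ (Fintype.card V - A.card) *
              (∑ j ∈ univ \ {i}, (if i ∈ A then (0:ℝ) else 1) * (if j ∈ A then (1:ℝ) else 0) * w j i)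
          + q ^ A.card * (1-q) ^ (Fintype.card V - A.card) *
              ((p/2) * ∑ j ∈ univ \ {i}, (if i ∈ A then (0:ℝ) else 1) * (if j ∈ A then (0:ℝ) else 1) * w j i)) := by
    rw [← Finset.sum_comm, Finset.mul_sum]
    refine Finset.sum_congr rfl fun A _ => ?_
    rw [RIE_ieRev_eq w A p, mul_left_comm]
    congr 1
    rw [Finset.mul_sum]
    exact Finset.sum_congr rfl fun i _ => by rw [mul_add, mul_add]
  rw [step1]
  have step2 : ∀ i : V, ∑ A : Finset V,
      ( q ^ A.card * (1-q) ^ (Fintype.card V - A.card) * ((if i ∈ A then (0:ℝ) else 1) * w i i)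
      + q ^ A.card * (1-q) ^ (Fintype.card V - A.card) *
          (∑ j ∈ univ \ {i}, (if i ∈ A then (0:ℝ) else 1) * (if j ∈ A then (1:ℝ) else 0) * w j i)
      + q ^ A.card * (1-q) ^ (Fintype.card V - A.card) *
          ((p/2) * ∑ j ∈ univ \ {i}, (if i ∈ A then (0:ℝ) else 1) * (if j ∈ A then (0:ℝ) else 1) * w j i))
      = (1-q) * w i i + (q*(1-q)) * (∑ j ∈ univ \ {i}, w j i)
        + (p/2)*((1-q)*(1-q)) * (∑ j ∈ univ \ {i}, w j i) := by
    intro i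
    rw [Finset.sum_add_distrib, Finset.sum_add_distrib]
    congr 1
    · congr 1
      · calc ∑ A : Finset V, q ^ A.card * (1-q) ^ (Fintype.card V - A.card) * ((if i ∈ A then (0:ℝ) else 1) * w i i)
            = (∑ A : Finset V, q ^ A.card * (1-q) ^ (Fintype.card V - A.card) * (if i ∈ A then (0:ℝ) else 1)) * w i i := by
              rw [Finset.sum_mul]; exact Finset.sum_congr rfl fun A _ => by ring
          _ = (1-q) * w i i := by rw [RIE_E1]
      · calc ∑ A : Finset V, q ^ A.card * (1-q) ^ (Fintype.card V - A.card) *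
              (∑ j ∈ univ \ {i}, (if i ∈ A then (0:ℝ) else 1) * (if j ∈ A then (1:ℝ) else 0) * w j i)
            = ∑ j ∈ univ \ {i}, ∑ A : Finset V, q ^ A.card * (1-q) ^ (Fintype.card V - A.card) *
                ((if i ∈ A then (0:ℝ) else 1) * (if j ∈ A then (1:ℝ) else 0) * w j i) := by
              simp only [Finset.mul_sum]; exact Finset.sum_comm
          _ = ∑ j ∈ univ \ {i}, (q * (1-q)) * w j i := by
              refine Finset.sum_congr rfl fun j hj => ?_
              have hij : i ≠ j := by
                rcases Finset.mem_sdiff.mp hj with ⟨_, hj2⟩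
                exact fun h => hj2 (Finset.mem_singleton.mpr h.symm)
              calc ∑ A : Finset V, q ^ A.card * (1-q) ^ (Fintype.card V - A.card) *
                    ((if i ∈ A then (0:ℝ) else 1) * (if j ∈ A then (1:ℝ) else 0) * w j i)
                  = (∑ A : Finset V, q ^ A.card * (1-q) ^ (Fintype.card V - A.card) *
                      (if i ∈ A then (0:ℝ) else 1) * (if j ∈ A then (1:ℝ) else 0)) * w j i := by
                    rw [Finset.sum_mul]; exact Finset.sum_congr rfl fun A _ => by ring
                _ = (q * (1-q)) * w j i := by rw [RIE_E2 q hij]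
          _ = (q*(1-q)) * (∑ j ∈ univ \ {i}, w j i) := by rw [Finset.mul_sum]
    · calc ∑ A : Finset V, q ^ A.card * (1-q) ^ (Fintype.card V - A.card) *
            ((p/2) * ∑ j ∈ univ \ {i}, (if i ∈ A then (0:ℝ) else 1) * (if j ∈ A then (0:ℝ) else 1) * w j i)
          = ∑ j ∈ univ \ {i}, ∑ A : Finset V, (p/2) * (q ^ A.card * (1-q) ^ (Fintype.card V - A.card) *
              ((if i ∈ A then (0:ℝ) else 1) * (if j ∈ A then (0:ℝ) else 1) * w j i)) := by
            rw [Finset.sum_comm]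
            refine Finset.sum_congr rfl fun A _ => ?_
            rw [mul_left_comm, Finset.mul_sum, Finset.mul_sum]
        _ = ∑ j ∈ univ \ {i}, (p/2) * (((1-q) * (1-q)) * w j i) := by
            refine Finset.sum_congr rfl fun j hj => ?_
            have hij : i ≠ j := by
              rcases Finset.mem_sdiff.mp hj with ⟨_, hj2⟩
              exact fun h => hj2 (Finset.mem_singleton.mpr h.symm)
            rw [← Finset.mul_sum]
            congr 1
            calc ∑ A : Finset V, q ^ A.card * (1-q) ^ (Fintype.card V - A.card) *
                  ((if i ∈ A then (0:ℝ) else 1) * (if j ∈ A then (0:ℝ) else 1) * w j i)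
                = (∑ A : Finset V, q ^ A.card * (1-q) ^ (Fintype.card V - A.card) *
                    (if i ∈ A then (0:ℝ) else 1) * (if j ∈ A then (0:ℝ) else 1)) * w j i := by
                  rw [Finset.sum_mul]; exact Finset.sum_congr rfl fun A _ => by ring
              _ = ((1-q) * (1-q)) * w j i := by rw [RIE_E3 q hij]
        _ = (p/2)*((1-q)*(1-q)) * (∑ j ∈ univ \ {i}, w j i) := by
            rw [Finset.mul_sum]
            exact Finset.sum_congr rfl fun j _ => by ring
  rw [Finset.sum_congr rfl fun i _ => step2 i]
  rw [Finset.sum_add_distrib, Finset.sum_add_distrib, ← Finset.mul_sum, ← Finset.mul_sum,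
    ← Finset.mul_sum, RIE_offdiag w hsymm]
  unfold totalSelf
  ring

end AuxRIE

/-- For an undirected social network with `λ = N/W`, `p = 2 - √2` and
`q = max{1 - √2(2+λ)/4, 0}`, the expected revenue of the randomized IE strategy that
places each buyer in the influence set independently with probability `q` equals
`(1-q)p(1-p)(λ + 2q + p(1-q))W`, and it is at least `2√2(2-√2)(√2-1)` times the
maximum revenue; in particular some influence set achieves this guarantee. -/
theorem randomized_IE_undirected
    {V : Type*} [Fintype V] [DecidableEq V] (w : V → V → ℝ)
    (hsymm : ∀ i j, w i j = w j i) (hnonneg : ∀ i j, 0 ≤ w i j)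
    (hW : 0 < totalEdge w)
    (lam p q : ℝ)
    (hlam : lam = totalSelf w / totalEdge w)
    (hp : p = 2 - Real.sqrt 2)
    (hq : q = max (1 - Real.sqrt 2 * (2 + lam) / 4) 0) :
    (∑ A : Finset V,
        q ^ A.card * (1 - q) ^ (Fintype.card V - A.card) * ieRev w A p
      = (1 - q) * p * (1 - p) * (lam + 2 * q + p * (1 - q)) * totalEdge w) ∧
    (∑ A : Finset V,
        q ^ A.card * (1 - q) ^ (Fintype.card V - A.card) * ieRev w A p
      ≥ 2 * Real.sqrt 2 * (2 - Real.sqrt 2) * (Real.sqrt 2 - 1) * maxRev w) ∧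
    ∃ A : Finset V,
      ieRev w A (2 - Real.sqrt 2)
        ≥ 2 * Real.sqrt 2 * (2 - Real.sqrt 2) * (Real.sqrt 2 - 1) * maxRev w := by
  have hs0 : (0:ℝ) ≤ Real.sqrt 2 := Real.sqrt_nonneg 2
  have hs2 : Real.sqrt 2 ^ 2 = 2 := Real.sq_sqrt (by norm_num)
  have hs14 : (1.4:ℝ) ≤ Real.sqrt 2 := by nlinarith
  have hs15 : Real.sqrt 2 ≤ (1.5:ℝ) := by nlinarith
  have hN0 : 0 ≤ totalSelf w := Finset.sum_nonneg fun i _ => hnonneg i i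
  have hlam0 : 0 ≤ lam := hlam ▸ div_nonneg hN0 hW.le
  have hNlam : totalSelf w = lam * totalEdge w := by
    rw [hlam]; field_simp
  have hq0 : 0 ≤ q := hq ▸ le_max_right _ _
  have hq1 : q < 1 := by
    rw [hq]
    apply max_lt _ one_pos
    nlinarith [hlam0, hs14]
  have part1 : ∑ A : Finset V,
        q ^ A.card * (1 - q) ^ (Fintype.card V - A.card) * ieRev w A p
      = (1 - q) * p * (1 - p) * (lam + 2 * q + p * (1 - q)) * totalEdge w := by
    rw [RIE_expectation w hsymm p q, hNlam]; ring
  have hcoeff : 2 * Real.sqrt 2 * (2 - Real.sqrt 2) * (Real.sqrt 2 - 1) * (1 + lam) / 4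
      ≤ (1 - q) * p * (1 - p) * (lam + 2 * q + p * (1 - q)) := by
    rw [hp]
    rcases le_or_gt (1 - Real.sqrt 2 * (2 + lam) / 4) 0 with h | h
    · have hq' : q = 0 := by rw [hq, max_eq_right h]
      rw [hq']
      have hcond : 4 ≤ Real.sqrt 2 * (2 + lam) := by nlinarith [h]
      have hlamlb : 2 * Real.sqrt 2 - 2 ≤ lam := by nlinarith [hcond, hs0, hs2]
      have h57 : (0:ℝ) ≤ 5 * Real.sqrt 2 - 7 := by nlinarith [hs14]
      have hkey : (1 - (0:ℝ)) * (2 - Real.sqrt 2) * (1 - (2 - Real.sqrt 2)) *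
              (lam + 2 * 0 + (2 - Real.sqrt 2) * (1 - 0))
            - 2 * Real.sqrt 2 * (2 - Real.sqrt 2) * (Real.sqrt 2 - 1) * (1 + lam) / 4
          = lam * (5 * Real.sqrt 2 - 7) + 12 * Real.sqrt 2 - 17 := by
        linear_combination (Real.sqrt 2 * lam / 2 + 3 * Real.sqrt 2 / 2 - 5 * lam / 2 - 13 / 2) * hs2
      have e1 : (2 * Real.sqrt 2 - 2) * (5 * Real.sqrt 2 - 7) ≤ lam * (5 * Real.sqrt 2 - 7) :=
        mul_le_mul_of_nonneg_right hlamlb h57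
      have e2 : (2 * Real.sqrt 2 - 2) * (5 * Real.sqrt 2 - 7) = 34 - 24 * Real.sqrt 2 := by
        linear_combination 10 * hs2
      have e3 : 12 * Real.sqrt 2 ≤ 17 := by nlinarith [hs2, hs0]
      linarith [hkey, e1, e2, e3]
    · have hq' : q = 1 - Real.sqrt 2 * (2 + lam) / 4 := by rw [hq, max_eq_left h.le]
      rw [hq']
      have hkey : (1 - (1 - Real.sqrt 2 * (2 + lam) / 4)) * (2 - Real.sqrt 2) *
              (1 - (2 - Real.sqrt 2)) *
              (lam + 2 * (1 - Real.sqrt 2 * (2 + lam) / 4)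
                + (2 - Real.sqrt 2) * (1 - (1 - Real.sqrt 2 * (2 + lam) / 4)))
            - 2 * Real.sqrt 2 * (2 - Real.sqrt 2) * (Real.sqrt 2 - 1) * (1 + lam) / 4
          = (6 - 4 * Real.sqrt 2) * lam ^ 2 / 8 := by
        linear_combination (Real.sqrt 2 ^ 3 * lam ^ 2 / 16 + Real.sqrt 2 ^ 3 * lam / 4
          + Real.sqrt 2 ^ 3 / 4 - 3 * Real.sqrt 2 ^ 2 * lam ^ 2 / 16
          - 3 * Real.sqrt 2 ^ 2 * lam / 4 - 3 * Real.sqrt 2 ^ 2 / 4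
          + Real.sqrt 2 * lam / 2 + Real.sqrt 2 / 2 + 3 * lam ^ 2 / 8) * hs2
      have hpos : 0 ≤ (6 - 4 * Real.sqrt 2) * lam ^ 2 / 8 := by
        have : (0:ℝ) ≤ 6 - 4 * Real.sqrt 2 := by nlinarith [hs15]
        positivity
      linarith [hkey, hpos]
  have hmax := RIE_maxRev_le w hsymm hnonneg
  have hc0 : (0:ℝ) ≤ 2 * Real.sqrt 2 * (2 - Real.sqrt 2) * (Real.sqrt 2 - 1) := by
    nlinarith [hs14, hs15, hs0]
  have part2 : ∑ A : Finset V,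
        q ^ A.card * (1 - q) ^ (Fintype.card V - A.card) * ieRev w A p
      ≥ 2 * Real.sqrt 2 * (2 - Real.sqrt 2) * (Real.sqrt 2 - 1) * maxRev w := by
    rw [part1]
    calc 2 * Real.sqrt 2 * (2 - Real.sqrt 2) * (Real.sqrt 2 - 1) * maxRev w
        ≤ 2 * Real.sqrt 2 * (2 - Real.sqrt 2) * (Real.sqrt 2 - 1) *
            ((totalEdge w + totalSelf w) / 4) := mul_le_mul_of_nonneg_left hmax hc0
      _ = 2 * Real.sqrt 2 * (2 - Real.sqrt 2) * (Real.sqrt 2 - 1) * (1 + lam) / 4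
            * totalEdge w := by rw [hNlam]; ring
      _ ≤ (1 - q) * p * (1 - p) * (lam + 2 * q + p * (1 - q)) * totalEdge w :=
          mul_le_mul_of_nonneg_right hcoeff hW.le
  refine ⟨part1, part2, ?_⟩
  by_contra hcon
  push_neg at hcon
  have hlt : ∀ A : Finset V, ieRev w A p
      < 2 * Real.sqrt 2 * (2 - Real.sqrt 2) * (Real.sqrt 2 - 1) * maxRev w := by
    intro A; rw [hp]; exact hcon A
  have hwt : ∀ A : Finset V, 0 ≤ q ^ A.card * (1 - q) ^ (Fintype.card V - A.card) :=
    fun A => mul_nonneg (pow_nonneg hq0 _) (pow_nonneg (by linarith) _)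
  have hstrict : ∑ A : Finset V,
        q ^ A.card * (1 - q) ^ (Fintype.card V - A.card) * ieRev w A p
      < ∑ A : Finset V, q ^ A.card * (1 - q) ^ (Fintype.card V - A.card) *
          (2 * Real.sqrt 2 * (2 - Real.sqrt 2) * (Real.sqrt 2 - 1) * maxRev w) := by
    refine Finset.sum_lt_sum (fun A _ => mul_le_mul_of_nonneg_left (hlt A).le (hwt A))
      ⟨(∅ : Finset V), Finset.mem_univ _, ?_⟩
    have hwt0 : 0 < q ^ (∅ : Finset V).card * (1 - q) ^ (Fintype.card V - (∅ : Finset V).card) := by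
      simp only [Finset.card_empty, pow_zero, one_mul]
      exact pow_pos (by linarith) _
    exact mul_lt_mul_of_pos_left (hlt ∅) hwt0
  rw [← Finset.sum_mul, RIE_E0 q, one_mul] at hstrict
  linarith [part2, hstrict]
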